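/- The price given veracious signal, viewed as a function of q, P^q(s, v̂) = (q·s·(1-p·1_{s>v̂}) + (1-q)K)/(q(1-p·1_{s>v̂}) + (1-q)D), evaluated at the benchmark threshold v̂ = v^B, is strictly convex in q for every s ≠ v^B, where K = (1-p)μ + p∫_{v_min}^{v^B} t g(t)dt, D = 1-p+pG(v^B), and v^B = K/D. -/

import Mathlib

open intervalIntegral

/-- at the benchmark threshold v̂ = v^B, the price
P^q(s, v̂) = (q·s·(1-p·1_{s>v̂}) + (1-q)K)/(q(1-p·1_{s>v̂}) + (1-q)D) is strictly
convex in q on [0,1] for every s ≠ v^B. -/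
theorem price_strictly_convex_in_q_at_benchmark
    (vmin vmax : ℝ) (hv : vmin < vmax)
    (p : ℝ) (hp : p ∈ Set.Ioo (0:ℝ) 1)
    (g : ℝ → ℝ)
    (hg_cont : ContinuousOn g (Set.Icc vmin vmax))
    (hg_pos : ∀ x ∈ Set.Icc vmin vmax, 0 < g x)
    (hg_density : ∫ t in vmin..vmax, g t = 1)
    (G : ℝ → ℝ) (hG : ∀ v, G v = ∫ t in vmin..v, g t)
    (μ : ℝ) (hμ : μ = ∫ t in vmin..vmax, t * g t)
    (vB : ℝ) (hvB_mem : vB ∈ Set.Ioo vmin vmax)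
    (K D : ℝ)
    (hK : K = (1 - p) * μ + p * ∫ t in vmin..vB, t * g t)
    (hD : D = 1 - p + p * G vB)
    (hvB : vB = K / D) :
    ∀ s : ℝ, s ≠ vB →
      StrictConvexOn ℝ (Set.Icc (0:ℝ) 1)
        (fun q : ℝ =>
          (q * s * (1 - p * (if vB < s then 1 else 0)) + (1 - q) * K) /
          (q * (1 - p * (if vB < s then 1 else 0)) + (1 - q) * D)) := by
  intro s hs
  obtain ⟨hp0, hp1⟩ := hp
  obtain ⟨hvB1, hvB2⟩ := hvB_mem
  -- integrability of g on the two subintervals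
  have hint1 : IntervalIntegrable g MeasureTheory.volume vmin vB := by
    apply ContinuousOn.intervalIntegrable
    rw [Set.uIcc_of_le hvB1.le]
    exact hg_cont.mono (Set.Icc_subset_Icc le_rfl hvB2.le)
  have hint2 : IntervalIntegrable g MeasureTheory.volume vB vmax := by
    apply ContinuousOn.intervalIntegrable
    rw [Set.uIcc_of_le hvB2.le]
    exact hg_cont.mono (Set.Icc_subset_Icc hvB1.le le_rfl)
  have hGpos : 0 < G vB := by
    rw [hG]
    apply intervalIntegral.intervalIntegral_pos_of_pos_on hint1
    · intro x hx
      exact hg_pos x ⟨hx.1.le, hx.2.le.trans hvB2.le⟩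
    · exact hvB1
  have hGlt : G vB < 1 := by
    have hsplit : (∫ t in vmin..vB, g t) + (∫ t in vB..vmax, g t)
        = ∫ t in vmin..vmax, g t :=
      intervalIntegral.integral_add_adjacent_intervals hint1 hint2
    have hpos2 : 0 < ∫ t in vB..vmax, g t := by
      apply intervalIntegral.intervalIntegral_pos_of_pos_on hint2
      · intro x hx
        exact hg_pos x ⟨hvB1.le.trans hx.1.le, hx.2.le⟩
      · exact hvB2
    rw [hG]
    linarith [hg_density, hsplit]
  set A : ℝ := 1 - p * (if vB < s then 1 else 0) with hA_def
  have hA_pos : 0 < A := by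
    rw [hA_def]; split <;> nlinarith
  have hD_pos : 0 < D := by nlinarith
  have hK' : K = vB * D := by
    rw [hvB, div_mul_cancel₀ _ hD_pos.ne']
  have key : (A - D) * (A * ((s - vB) * D)) < 0 := by
    rw [hA_def]
    by_cases h : vB < s
    · simp only [if_pos h]
      have h1 : (1 - p * 1) - D = -(p * G vB) := by rw [hD]; ring
      have h2 : 0 < (1 - p * 1) * ((s - vB) * D) := by
        apply mul_pos (by linarith) (mul_pos (by linarith) hD_pos)
      rw [h1]
      nlinarith [mul_pos hp0 hGpos]
    · simp only [if_neg h]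
      have hslt : s < vB := lt_of_le_of_ne (not_lt.mp h) hs
      have h1 : (1 - p * 0) - D = p * (1 - G vB) := by rw [hD]; ring
      have h2 : (1 - p * 0) * ((s - vB) * D) < 0 := by
        have : (s - vB) * D < 0 := mul_neg_of_neg_of_pos (by linarith) hD_pos
        nlinarith
      rw [h1]
      nlinarith [mul_pos hp0 (by linarith : (0:ℝ) < 1 - G vB)]
  constructor
  · exact convex_Icc 0 1
  · intro x hx y hy hxy a b ha hb hab
    have hb' : b = 1 - a := by linarith
    subst hb'
    have du : 0 < x * A + (1 - x) * D := by
      rcases eq_or_lt_of_le hx.1 with h0 | h0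
      · rw [← h0]; simpa using hD_pos
      · have : 0 ≤ (1 - x) * D := mul_nonneg (by linarith [hx.2]) hD_pos.le
        nlinarith [mul_pos h0 hA_pos]
    have dv : 0 < y * A + (1 - y) * D := by
      rcases eq_or_lt_of_le hy.1 with h0 | h0
      · rw [← h0]; simpa using hD_pos
      · have : 0 ≤ (1 - y) * D := mul_nonneg (by linarith [hy.2]) hD_pos.le
        nlinarith [mul_pos h0 hA_pos]
    have dz : 0 < (a * x + (1 - a) * y) * A + (1 - (a * x + (1 - a) * y)) * D := by
      have h1 : (a * x + (1 - a) * y) * A + (1 - (a * x + (1 - a) * y)) * D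
          = a * (x * A + (1 - x) * D) + (1 - a) * (y * A + (1 - y) * D) := by ring
      rw [h1]
      have := mul_pos ha du
      have := mul_pos hb dv
      linarith
    simp only [smul_eq_mul, hK']
    have hRHS : a * ((x * s * A + (1 - x) * (vB * D)) / (x * A + (1 - x) * D))
        + (1 - a) * ((y * s * A + (1 - y) * (vB * D)) / (y * A + (1 - y) * D))
        = (a * (x * s * A + (1 - x) * (vB * D)) * (y * A + (1 - y) * D)
            + (1 - a) * (y * s * A + (1 - y) * (vB * D)) * (x * A + (1 - x) * D))
          / ((x * A + (1 - x) * D) * (y * A + (1 - y) * D)) := by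
      rw [mul_div_assoc', mul_div_assoc', div_add_div _ _ du.ne' dv.ne']; ring
    rw [hRHS, div_lt_div_iff₀ dz (mul_pos du dv)]
    have hxy0 : x - y ≠ 0 := sub_ne_zero.2 hxy
    have hxy2 : 0 < (x - y) ^ 2 := by positivity
    have hint : 0 < a * (1 - a) * (x - y) ^ 2 * (-((A - D) * (A * ((s - vB) * D)))) :=
      mul_pos (mul_pos (mul_pos ha hb) hxy2) (neg_pos.2 key)
    have hid : (a * (x * s * A + (1 - x) * (vB * D)) * (y * A + (1 - y) * D)
            + (1 - a) * (y * s * A + (1 - y) * (vB * D)) * (x * A + (1 - x) * D))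
          * ((a * x + (1 - a) * y) * A + (1 - (a * x + (1 - a) * y)) * D)
        - ((a * x + (1 - a) * y) * s * A + (1 - (a * x + (1 - a) * y)) * (vB * D))
          * ((x * A + (1 - x) * D) * (y * A + (1 - y) * D))
        = a * (1 - a) * (x - y) ^ 2 * (-((A - D) * (A * ((s - vB) * D)))) := by
      ring
    linarith [hid, hint]
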